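/- Fix μ > 0 and an integer n ≥ 2μ. For 0 < q < 1 let θ_n(q) be the unique positive solution of ∑_{i=0}^{n−1} θ q^i/(1+θ q^i) = μ. Then as q → 1⁻, θ_n(q) converges to μ/(n − μ); equivalently, θ_n(q)/(1 + θ_n(q)) → μ/n. -/

import Mathlib

open Filter Finset

/-- Fix `μ > 0` and `n ≥ 2μ`. If, for each `0 < q < 1`, `θ q` is the
(unique) positive solution of `∑_{i=0}^{n-1} θ q^i/(1+θ q^i) = μ`, then `θ q → μ/(n-μ)` as
`q → 1⁻`; equivalently `θ q / (1 + θ q) → μ/n`. -/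
theorem theta_tendsto_of_q_to_one (μ : ℝ) (hμ : 0 < μ) (n : ℕ) (hn : 2 * μ ≤ n)
    (θ : ℝ → ℝ)
    (hθ : ∀ q ∈ Set.Ioo (0 : ℝ) 1,
      0 < θ q ∧ ∑ i ∈ range n, θ q * q ^ i / (1 + θ q * q ^ i) = μ) :
    Tendsto θ (nhdsWithin 1 (Set.Ioo (0 : ℝ) 1)) (nhds (μ / ((n : ℝ) - μ))) ∧
      Tendsto (fun q => θ q / (1 + θ q)) (nhdsWithin 1 (Set.Ioo (0 : ℝ) 1))
        (nhds (μ / (n : ℝ))) := by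
  have hμn : μ < (n : ℝ) := lt_of_lt_of_le (by linarith) hn
  have hd : (0:ℝ) < (n:ℝ) - μ := by linarith
  set a := μ / ((n:ℝ) - μ) with ha
  have ha0 : 0 < a := div_pos hμ hd
  have hn0 : (0:ℝ) < n := lt_trans hμ hμn
  have mono : ∀ x y : ℝ, 0 ≤ x → x ≤ y → x/(1+x) ≤ y/(1+y) := by
    intro x y hx hxy
    rw [div_le_div_iff₀ (by linarith) (by linarith)]
    nlinarith
  have key : ∀ q ∈ Set.Ioo (0:ℝ) 1, a ≤ θ q ∧ θ q ≤ a / q^(n-1) := by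
    intro q hq
    obtain ⟨hq0, hq1⟩ := hq
    obtain ⟨hθ0, hsum⟩ := hθ q ⟨hq0, hq1⟩
    set t := θ q with ht
    have hqn : 0 < q ^ (n-1) := pow_pos hq0 _
    constructor
    · have hub : μ ≤ n * (t/(1+t)) := by
        rw [← hsum]
        calc ∑ i ∈ range n, t*q^i/(1+t*q^i) ≤ ∑ i ∈ range n, t/(1+t) := by
              apply Finset.sum_le_sum
              intro i _
              have h1 : t * q^i ≤ t := by
                nlinarith [pow_le_one₀ hq0.le hq1.le (n := i), pow_pos hq0 i]
              exact mono (t*q^i) t (by positivity) h1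
          _ = n * (t/(1+t)) := by
              rw [Finset.sum_const, card_range, nsmul_eq_mul]
      have h1t : (0:ℝ) < 1 + t := by linarith
      have hub' : μ * (1+t) ≤ n * t := by
        have hts : t/(1+t)*(1+t) = t := div_mul_cancel₀ t h1t.ne'
        nlinarith [mul_le_mul_of_nonneg_right hub h1t.le]
      rw [ha, div_le_iff₀ hd]
      nlinarith
    · have hlb : n * (t*q^(n-1)/(1+t*q^(n-1))) ≤ μ := by
        rw [← hsum]
        calc (n:ℝ) * (t*q^(n-1)/(1+t*q^(n-1)))
            = ∑ _i ∈ range n, t*q^(n-1)/(1+t*q^(n-1)) := by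
              rw [Finset.sum_const, card_range, nsmul_eq_mul]
          _ ≤ ∑ i ∈ range n, t*q^i/(1+t*q^i) := by
              apply Finset.sum_le_sum
              intro i hi
              have hle : q^(n-1) ≤ q^i :=
                pow_le_pow_of_le_one hq0.le hq1.le
                  (Nat.le_sub_one_of_lt (Finset.mem_range.mp hi))
              exact mono (t*q^(n-1)) (t*q^i) (by positivity)
                (by nlinarith)
      set s := t * q^(n-1) with hs
      have hs0 : 0 < s := by positivity
      have h1s : (0:ℝ) < 1 + s := by linarith
      have hlb' : n * s ≤ μ * (1+s) := by
        have hss : s/(1+s)*(1+s) = s := div_mul_cancel₀ s h1s.ne'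
        nlinarith [mul_le_mul_of_nonneg_right hlb h1s.le]
      rw [le_div_iff₀ hqn]
      show s ≤ a
      rw [ha, le_div_iff₀ hd]
      nlinarith
  have h2 : Tendsto (fun q:ℝ => a / q^(n-1)) (nhdsWithin 1 (Set.Ioo (0:ℝ) 1)) (nhds a) := by
    have h3 : Tendsto (fun q:ℝ => a / q^(n-1)) (nhds 1) (nhds (a/1^(n-1))) :=
      Tendsto.div tendsto_const_nhds ((continuous_pow _).tendsto 1) (by norm_num)
    simpa using h3.mono_left nhdsWithin_le_nhds
  have hfirst : Tendsto θ (nhdsWithin 1 (Set.Ioo (0:ℝ) 1)) (nhds a) := by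
    apply tendsto_of_tendsto_of_tendsto_of_le_of_le' tendsto_const_nhds h2
    · filter_upwards [self_mem_nhdsWithin] with q hq using (key q hq).1
    · filter_upwards [self_mem_nhdsWithin] with q hq using (key q hq).2
  refine ⟨hfirst, ?_⟩
  have h1a : (1:ℝ) + a ≠ 0 := by positivity
  have hcomp : Tendsto (fun q => θ q / (1 + θ q))
      (nhdsWithin 1 (Set.Ioo (0:ℝ) 1)) (nhds (a/(1+a))) :=
    hfirst.div (tendsto_const_nhds.add hfirst) h1a
  have : a/(1+a) = μ/(n:ℝ) := by
    rw [ha]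
    field_simp
    ring
  rwa [this] at hcomp
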